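/- In the Weil algebra A = ℝ[X,Y]/(X³Y, X²Y², Y⁴, X³−Y³), the monomials 1, X, Y, X², XY, Y², X³, X²Y, XY², X⁴ form an ℝ-vector space basis of A; in particular dim_ℝ A = 10, X⁴ ≠ 0 and X⁵ = 0. -/

import Mathlib

/-- The Weil algebra `A = ℝ[X,Y]/(X³Y, X²Y², Y⁴, X³−Y³)`. -/
noncomputable abbrev WB : Type :=
  MvPolynomial (Fin 2) ℝ ⧸
    (Ideal.span {(MvPolynomial.X 0 : MvPolynomial (Fin 2) ℝ) ^ 3 * MvPolynomial.X 1,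
      (MvPolynomial.X 0) ^ 2 * (MvPolynomial.X 1) ^ 2, (MvPolynomial.X 1) ^ 4,
      (MvPolynomial.X 0) ^ 3 - (MvPolynomial.X 1) ^ 3} : Ideal (MvPolynomial (Fin 2) ℝ))

/-- The residue class of `X`. -/
noncomputable def bx : WB := Ideal.Quotient.mk _ (MvPolynomial.X 0)

/-- The residue class of `Y`. -/
noncomputable def bY : WB := Ideal.Quotient.mk _ (MvPolynomial.X 1)

/-- The maximal (nilpotent) ideal `𝔫 = (X, Y)` of `A`. -/
noncomputable def mIdeal : Ideal WB := Ideal.span {bx, bY}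

/-- The ten monomials `1, X, Y, X², XY, Y², X³, X²Y, XY², X⁴` in `A`. -/
noncomputable def monos : Fin 10 → WB :=
  ![1, bx, bY, bx ^ 2, bx * bY, bY ^ 2, bx ^ 3, bx ^ 2 * bY, bx * bY ^ 2, bx ^ 4]

open MvPolynomial
noncomputable abbrev R2 := MvPolynomial (Fin 2) ℝ
noncomputable def dd (a b : ℕ) : Fin 2 →₀ ℕ := Finsupp.single 0 a + Finsupp.single 1 b
lemma dd_apply0 (a b : ℕ) : dd a b 0 = a := by simp [dd, Finsupp.single_apply]
lemma dd_apply1 (a b : ℕ) : dd a b 1 = b := by simp [dd, Finsupp.single_apply]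
lemma dd_le {a b c d : ℕ} : dd a b ≤ dd c d ↔ a ≤ c ∧ b ≤ d := by
  rw [Finsupp.le_def]
  constructor
  · intro h
    exact ⟨by simpa [dd_apply0] using h 0, by simpa [dd_apply1] using h 1⟩
  · rintro ⟨h1, h2⟩ i
    fin_cases i <;> simp [dd_apply0, dd_apply1] <;> assumption
lemma dd_sub {a b c d : ℕ} : dd c d - dd a b = dd (c-a) (d-b) := by
  ext i; fin_cases i <;> simp [Finsupp.tsub_apply, dd_apply0, dd_apply1]
lemma dd_zero : dd 0 0 = 0 := by simp [dd]
lemma dd_eq {a b c d : ℕ} : dd a b = dd c d ↔ a = c ∧ b = d := by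
  constructor
  · intro h
    exact ⟨by simpa [dd_apply0] using congrFun (congrArg DFunLike.coe h) 0,
           by simpa [dd_apply1] using congrFun (congrArg DFunLike.coe h) 1⟩
  · rintro ⟨rfl, rfl⟩; rfl
lemma dd_add {a b c d : ℕ} : dd a b + dd c d = dd (a+c) (b+d) := by
  ext i; fin_cases i <;> simp [Finsupp.add_apply, dd_apply0, dd_apply1]
lemma dd_smul {a b : ℕ} (n : ℕ) : n • dd a b = dd (n*a) (n*b) := by
  ext i; fin_cases i <;> simp [Finsupp.smul_apply, dd_apply0, dd_apply1]
lemma dd_eq_zero {a b : ℕ} : dd a b = 0 ↔ a = 0 ∧ b = 0 := by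
  rw [← dd_zero, dd_eq]
lemma mono_eq (a b : ℕ) : (X 0 : R2)^a * (X 1)^b = monomial (dd a b) 1 := by
  simp [X_pow_eq_monomial, monomial_mul, dd]
lemma g1_eq : (X 0 : R2)^3 * X 1 = monomial (dd 3 1) 1 := by
  rw [show ((X 0:R2)^3 * X 1) = (X 0)^3 * (X 1)^1 by ring, mono_eq]
lemma g2_eq : (X 0 : R2)^2 * (X 1)^2 = monomial (dd 2 2) 1 := mono_eq 2 2
lemma g3_eq : ((X 1 : R2))^4 = monomial (dd 0 4) 1 := by
  rw [show ((X 1:R2)^4) = (X 0)^0 * (X 1)^4 by ring, mono_eq]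
lemma x3_eq : ((X 0 : R2))^3 = monomial (dd 3 0) 1 := by
  rw [show ((X 0:R2)^3) = (X 0)^3 * (X 1)^0 by ring, mono_eq]
lemma y3_eq : ((X 1 : R2))^3 = monomial (dd 0 3) 1 := by
  rw [show ((X 1:R2)^3) = (X 0)^0 * (X 1)^3 by ring, mono_eq]

noncomputable def cf : Fin 10 → (R2 →ₗ[ℝ] ℝ)
  | 0 => lcoeff ℝ (dd 0 0)
  | 1 => lcoeff ℝ (dd 1 0)
  | 2 => lcoeff ℝ (dd 0 1)
  | 3 => lcoeff ℝ (dd 2 0)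
  | 4 => lcoeff ℝ (dd 1 1)
  | 5 => lcoeff ℝ (dd 0 2)
  | 6 => lcoeff ℝ (dd 3 0) + lcoeff ℝ (dd 0 3)
  | 7 => lcoeff ℝ (dd 2 1)
  | 8 => lcoeff ℝ (dd 1 2)
  | 9 => lcoeff ℝ (dd 4 0) + lcoeff ℝ (dd 1 3)

noncomputable def φ : R2 →ₗ[ℝ] (Fin 10 → ℝ) := LinearMap.pi cf

lemma phi_apply (p : R2) (j : Fin 10) : φ p j = cf j p := rfl

noncomputable def Isp : Ideal R2 := Ideal.span {(X 0 : R2) ^ 3 * X 1,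
      (X 0) ^ 2 * (X 1) ^ 2, (X 1) ^ 4, (X 0) ^ 3 - (X 1) ^ 3}

lemma phi_vanish {p : R2} (hp : p ∈ Isp) : φ p = 0 := by
  have key : ∀ x ∈ Isp, ∀ q : R2, φ (q * x) = 0 := by
    intro x hx
    refine Submodule.span_induction ?_ ?_ ?_ ?_ hx
    · intro g hg q
      simp only [Set.mem_insert_iff, Set.mem_singleton_iff] at hg
      funext j
      rw [phi_apply]
      rcases hg with rfl | rfl | rfl | rfl
      · rw [g1_eq]
        fin_cases j <;>
          simp [cf, coeff_mul_monomial', dd_le, dd_sub, dd_zero, dd_eq_zero]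
      · rw [g2_eq]
        fin_cases j <;>
          simp [cf, coeff_mul_monomial', dd_le, dd_sub, dd_zero, dd_eq_zero]
      · rw [g3_eq]
        fin_cases j <;>
          simp [cf, coeff_mul_monomial', dd_le, dd_sub, dd_zero, dd_eq_zero]
      · rw [x3_eq, y3_eq]
        fin_cases j <;>
          simp [cf, mul_sub, coeff_mul_monomial', dd_le, dd_sub, dd_zero, dd_eq_zero]
    · intro q; simp
    · intro a b _ _ ha hb q; simp [mul_add, ha, hb]
    · intro r m _ hm q
      simpa [smul_eq_mul, mul_comm, mul_assoc, mul_left_comm] using hm (q * r)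
  simpa using key p hp 1

noncomputable def Pm : Fin 10 → R2
  | 0 => 1
  | 1 => X 0
  | 2 => X 1
  | 3 => (X 0)^2
  | 4 => X 0 * X 1
  | 5 => (X 1)^2
  | 6 => (X 0)^3
  | 7 => (X 0)^2 * X 1
  | 8 => X 0 * (X 1)^2
  | 9 => (X 0)^4

lemma cf_P (j i : Fin 10) : cf j (Pm i) = if i = j then 1 else 0 := by
  have h1 : (1 : R2) = monomial (dd 0 0) 1 := by rw [← mono_eq]; ring
  have h2 : (X 0 : R2) = monomial (dd 1 0) 1 := by rw [← mono_eq]; ring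
  have h3 : (X 1 : R2) = monomial (dd 0 1) 1 := by rw [← mono_eq]; ring
  have h4 : ((X 0 : R2))^2 = monomial (dd 2 0) 1 := by rw [← mono_eq]; ring
  have h5 : (X 0 : R2) * X 1 = monomial (dd 1 1) 1 := by rw [← mono_eq]; ring
  have h6 : ((X 1 : R2))^2 = monomial (dd 0 2) 1 := by rw [← mono_eq]; ring
  have h7 : ((X 0 : R2))^2 * X 1 = monomial (dd 2 1) 1 := by rw [← mono_eq]; ring
  have h8 : (X 0 : R2) * (X 1)^2 = monomial (dd 1 2) 1 := by rw [← mono_eq]; ring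
  have h9 : ((X 0 : R2))^4 = monomial (dd 4 0) 1 := by rw [← mono_eq]; ring
  fin_cases i <;> fin_cases j <;>
    simp [cf, Pm, h1, h2, h3, h5, monomial_pow, monomial_mul,
      coeff_monomial, dd_eq, dd_add, dd_smul, dd_eq_zero]

lemma WB_eq_quot : WB = (R2 ⧸ Isp) := rfl

noncomputable def mkq : R2 →ₐ[ℝ] WB := Ideal.Quotient.mkₐ ℝ Isp

lemma mkq_eq (p : R2) : mkq p = Ideal.Quotient.mk Isp p := rfl

lemma monos_mk (i : Fin 10) : monos i = mkq (Pm i) := by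
  fin_cases i
  · show (1 : WB) = mkq 1; simp
  · show bx = mkq (X 0); rfl
  · show bY = mkq (X 1); rfl
  · show bx ^ 2 = mkq ((X 0) ^ 2); simp [bx, mkq_eq, Isp, map_pow]; rfl
  · show bx * bY = mkq (X 0 * X 1); simp [bx, bY, mkq_eq, Isp, map_mul]; rfl
  · show bY ^ 2 = mkq ((X 1) ^ 2); simp [bY, mkq_eq, Isp, map_pow]; rfl
  · show bx ^ 3 = mkq ((X 0) ^ 3); simp [bx, mkq_eq, Isp, map_pow]; rfl
  · show bx ^ 2 * bY = mkq ((X 0) ^ 2 * X 1); simp [bx, bY, mkq_eq, Isp, map_mul, map_pow]; rfl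
  · show bx * bY ^ 2 = mkq (X 0 * (X 1) ^ 2); simp [bx, bY, mkq_eq, Isp, map_mul, map_pow]; rfl
  · show bx ^ 4 = mkq ((X 0) ^ 4); simp [bx, mkq_eq, Isp, map_pow]; rfl

lemma r1 : bx ^ 3 * bY = 0 := by
  rw [bx, bY, ← map_pow, ← map_mul, Ideal.Quotient.eq_zero_iff_mem]
  exact Ideal.subset_span (by simp)

lemma r2 : bx ^ 2 * bY ^ 2 = 0 := by
  rw [bx, bY, ← map_pow, ← map_pow, ← map_mul, Ideal.Quotient.eq_zero_iff_mem]
  exact Ideal.subset_span (by simp)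

lemma r3 : bY ^ 4 = 0 := by
  rw [bY, ← map_pow, Ideal.Quotient.eq_zero_iff_mem]
  exact Ideal.subset_span (by simp)

lemma r4 : bx ^ 3 = bY ^ 3 := by
  rw [bx, bY, ← map_pow, ← map_pow, Ideal.Quotient.mk_eq_mk_iff_sub_mem]
  exact Ideal.subset_span (by simp)

lemma hli : LinearIndependent ℝ monos := by
  rw [Fintype.linearIndependent_iff]
  intro c hc
  have hmk : mkq (∑ i, c i • Pm i) = 0 := by
    rw [map_sum]
    simp only [map_smul, ← monos_mk]
    exact hc
  have hmem : (∑ i, c i • Pm i) ∈ Isp := by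
    rw [mkq_eq] at hmk; exact Ideal.Quotient.eq_zero_iff_mem.mp hmk
  have h0 := phi_vanish hmem
  intro j
  have hj := congrFun h0 j
  rw [map_sum] at hj
  simpa [Finset.sum_apply, phi_apply, map_smul, cf_P] using hj

lemma bx5 : bx ^ 5 = 0 := by
  have h : bx ^ 5 = bx ^ 2 * bx ^ 3 := by ring
  rw [h, r4, show bx ^ 2 * bY ^ 3 = bx ^ 2 * bY ^ 2 * bY by ring, r2, zero_mul]

set_option maxHeartbeats 1000000 in
noncomputable def SS_dummy : Nat := 0
noncomputable def SS : Submodule ℝ WB := Submodule.span ℝ (Set.range monos)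

set_option maxHeartbeats 1000000 in
lemma span_top : ⊤ ≤ Submodule.span ℝ (Set.range monos) := by
  rw [show Submodule.span ℝ (Set.range monos) = SS from rfl]
  have hS : SS = Submodule.span ℝ (Set.range monos) := rfl
  set S := SS
  have hmem : ∀ i : Fin 10, monos i ∈ S := fun i => hS ▸ Submodule.subset_span ⟨i, rfl⟩
  have hm0 : (1 : WB) ∈ S := hmem 0
  have hbx : ∀ s ∈ S, bx * s ∈ S := by
    intro s hs
    refine Submodule.span_induction ?_ ?_ ?_ ?_ hs
    · rintro t ⟨i, rfl⟩
      fin_cases i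
      · show bx * (1 : WB) ∈ S; rw [mul_one]; exact hmem 1
      · show bx * bx ∈ S; rw [← pow_two]; exact hmem 3
      · show bx * bY ∈ S; exact hmem 4
      · show bx * bx ^ 2 ∈ S; rw [show bx * bx ^ 2 = bx ^ 3 by ring]; exact hmem 6
      · show bx * (bx * bY) ∈ S
        rw [show bx * (bx * bY) = bx ^ 2 * bY by ring]; exact hmem 7
      · show bx * bY ^ 2 ∈ S; exact hmem 8
      · show bx * bx ^ 3 ∈ S; rw [show bx * bx ^ 3 = bx ^ 4 by ring]; exact hmem 9
      · show bx * (bx ^ 2 * bY) ∈ S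
        rw [show bx * (bx ^ 2 * bY) = bx ^ 3 * bY by ring, r1]; exact S.zero_mem
      · show bx * (bx * bY ^ 2) ∈ S
        rw [show bx * (bx * bY ^ 2) = bx ^ 2 * bY ^ 2 by ring, r2]; exact S.zero_mem
      · show bx * bx ^ 4 ∈ S
        rw [show bx * bx ^ 4 = bx ^ 5 by ring, bx5]; exact S.zero_mem
    · rw [mul_zero]; exact S.zero_mem
    · intro a b _ _ ha hb; rw [mul_add]; exact S.add_mem ha hb
    · intro a t _ ht; rw [mul_smul_comm]; exact S.smul_mem a ht
  have hby : ∀ s ∈ S, bY * s ∈ S := by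
    intro s hs
    refine Submodule.span_induction ?_ ?_ ?_ ?_ hs
    · rintro t ⟨i, rfl⟩
      fin_cases i
      · show bY * (1 : WB) ∈ S; rw [mul_one]; exact hmem 2
      · show bY * bx ∈ S; rw [show bY * bx = bx * bY by ring]; exact hmem 4
      · show bY * bY ∈ S; rw [← pow_two]; exact hmem 5
      · show bY * bx ^ 2 ∈ S; rw [show bY * bx ^ 2 = bx ^ 2 * bY by ring]; exact hmem 7
      · show bY * (bx * bY) ∈ S
        rw [show bY * (bx * bY) = bx * bY ^ 2 by ring]; exact hmem 8
      · show bY * bY ^ 2 ∈ S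
        rw [show bY * bY ^ 2 = bY ^ 3 by ring, ← r4]; exact hmem 6
      · show bY * bx ^ 3 ∈ S
        rw [show bY * bx ^ 3 = bx ^ 3 * bY by ring, r1]; exact S.zero_mem
      · show bY * (bx ^ 2 * bY) ∈ S
        rw [show bY * (bx ^ 2 * bY) = bx ^ 2 * bY ^ 2 by ring, r2]; exact S.zero_mem
      · show bY * (bx * bY ^ 2) ∈ S
        rw [show bY * (bx * bY ^ 2) = bx * bY ^ 3 by ring, ← r4,
          show bx * bx ^ 3 = bx ^ 4 by ring]
        exact hmem 9
      · show bY * bx ^ 4 ∈ S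
        rw [show bY * bx ^ 4 = bx * (bx ^ 3 * bY) by ring, r1, mul_zero]
        exact S.zero_mem
    · rw [mul_zero]; exact S.zero_mem
    · intro a b _ _ ha hb; rw [mul_add]; exact S.add_mem ha hb
    · intro a t _ ht; rw [mul_smul_comm]; exact S.smul_mem a ht
  intro x _
  obtain ⟨p, rfl⟩ := Ideal.Quotient.mk_surjective x
  refine MvPolynomial.induction_on (motive := fun q => (Ideal.Quotient.mk Isp q) ∈ S) p ?_ ?_ ?_
  · intro a
    have : (Ideal.Quotient.mk Isp) (C a) = a • (1 : WB) := by
      rw [show (C a : R2) = algebraMap ℝ R2 a from rfl, ← mkq_eq, AlgHom.commutes,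
        Algebra.algebraMap_eq_smul_one]
    rw [this]
    exact S.smul_mem a hm0
  · intro p q hp hq
    rw [map_add]
    exact S.add_mem hp hq
  · intro p i hp
    rw [map_mul]
    have h2 : i = 0 ∨ i = 1 := by omega
    rcases h2 with rfl | rfl
    · rw [show ((Ideal.Quotient.mk Isp) (X 0) : WB) = bx from rfl,
        mul_comm ((Ideal.Quotient.mk Isp) p) bx]
      exact hbx _ hp
    · rw [show ((Ideal.Quotient.mk Isp) (X 1) : WB) = bY from rfl,
        mul_comm ((Ideal.Quotient.mk Isp) p) bY]
      exact hby _ hp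

/-- In `A = ℝ[X,Y]/(X³Y, X²Y², Y⁴, X³−Y³)`, the monomials
`1, X, Y, X², XY, Y², X³, X²Y, XY², X⁴` form an ℝ-vector space basis; in particular
`dim_ℝ A = 10`, `X⁴ ≠ 0` and `X⁵ = 0`. -/
theorem stmt17 :
    (∃ bas : Module.Basis (Fin 10) ℝ WB, ∀ i, bas i = monos i) ∧
    Module.finrank ℝ WB = 10 ∧ bx ^ 4 ≠ 0 ∧ bx ^ 5 = 0 := by
  refine ⟨⟨Module.Basis.mk hli span_top, fun i => Module.Basis.mk_apply hli span_top i⟩, ?_, ?_, bx5⟩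
  · rw [Module.finrank_eq_card_basis (Module.Basis.mk hli span_top), Fintype.card_fin]
  · have h := (Module.Basis.mk hli span_top).ne_zero 9
    rwa [Module.Basis.mk_apply hli span_top 9, show monos 9 = bx ^ 4 from rfl] at h
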